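/- If S_N(ρ) ≥ S_M(ρ) for all density matrices ρ (with M, N POVMs on a d-dimensional space), then every element of N is a real linear combination of elements of M. -/

import Mathlib

open Matrix BigOperators
open scoped Classical ComplexOrder

/-- A (finitely indexed) POVM on `ℂ^d`: positive semidefinite elements summing to the identity. -/
def IsPOVM {d : ℕ} {ι : Type*} [Fintype ι] (M : ι → Matrix (Fin d) (Fin d) ℂ) : Prop :=
  (∀ i, (M i).PosSemidef) ∧ ∑ i, M i = 1

/-- A density matrix: positive semidefinite with unit trace. -/
def IsDensity {d : ℕ} (ρ : Matrix (Fin d) (Fin d) ℂ) : Prop :=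
  ρ.PosSemidef ∧ ρ.trace = 1

/-- Outcome probability `tr(M_i ρ)` (real part). -/
noncomputable def prob {d : ℕ} {ι : Type*} [Fintype ι] (M : ι → Matrix (Fin d) (Fin d) ℂ)
    (ρ : Matrix (Fin d) (Fin d) ℂ) (i : ι) : ℝ := ((M i * ρ).trace).re

/-- Measured relative entropy `D_M(ρ‖σ) = Σ_i p_i log (p_i / q_i)`. -/
noncomputable def Dmeas {d : ℕ} {ι : Type*} [Fintype ι] (M : ι → Matrix (Fin d) (Fin d) ℂ)
    (ρ σ : Matrix (Fin d) (Fin d) ℂ) : ℝ :=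
  ∑ i, prob M ρ i * Real.log (prob M ρ i / prob M σ i)

/-- Observational entropy `S_M(ρ) = -Σ_i p_i log (p_i / V_i)` with `V_i = tr M_i`. -/
noncomputable def Sobs {d : ℕ} {ι : Type*} [Fintype ι] (M : ι → Matrix (Fin d) (Fin d) ℂ)
    (ρ : Matrix (Fin d) (Fin d) ℂ) : ℝ :=
  -∑ i, prob M ρ i * Real.log (prob M ρ i / ((M i).trace).re)

/-- `N` is a stochastic post-processing of `M` (`N ≫ M`). -/
def StochPost {d : ℕ} {ι κ : Type*} [Fintype ι] [Fintype κ]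
    (N : κ → Matrix (Fin d) (Fin d) ℂ) (M : ι → Matrix (Fin d) (Fin d) ℂ) : Prop :=
  ∃ Λ : κ → ι → ℝ, (∀ j i, 0 ≤ Λ j i) ∧ (∀ i, ∑ j, Λ j i = 1) ∧
    ∀ j, N j = ∑ i, Λ j i • M i

section Helpers

lemma trace_psd_nonneg {k : ℕ} {P : Matrix (Fin k) (Fin k) ℂ} (hP : P.PosSemidef) :
    0 ≤ P.trace := by
  obtain ⟨C, rfl⟩ : ∃ C : Matrix (Fin k) (Fin k) ℂ, P = Cᴴ * C := by
    open scoped MatrixOrder Matrix.Norms.L2Operator in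
    exact CStarAlgebra.nonneg_iff_eq_star_mul_self.mp hP.nonneg
  have : (Cᴴ * C).trace = ∑ j, ∑ i, star (C i j) * C i j := by
    simp [Matrix.trace, Matrix.diag, Matrix.mul_apply, Matrix.conjTranspose_apply]
  rw [this]
  exact Finset.sum_nonneg fun j _ => Finset.sum_nonneg fun i _ => star_mul_self_nonneg _

lemma trace_psd_eq_zero {k : ℕ} {P : Matrix (Fin k) (Fin k) ℂ} (hP : P.PosSemidef)
    (h : P.trace = 0) : P = 0 := by
  obtain ⟨C, rfl⟩ : ∃ C : Matrix (Fin k) (Fin k) ℂ, P = Cᴴ * C := by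
    open scoped MatrixOrder Matrix.Norms.L2Operator in
    exact CStarAlgebra.nonneg_iff_eq_star_mul_self.mp hP.nonneg
  suffices hC : C = 0 by simp [hC]
  have h2 : (Cᴴ * C).trace = ∑ j, ∑ i, star (C i j) * C i j := by
    simp [Matrix.trace, Matrix.diag, Matrix.mul_apply, Matrix.conjTranspose_apply]
  rw [h2] at h
  have h3 := (Finset.sum_eq_zero_iff_of_nonneg (fun j _ =>
    Finset.sum_nonneg fun i _ => star_mul_self_nonneg (C i j))).mp h
  ext i j
  have h4 := (Finset.sum_eq_zero_iff_of_nonneg (fun i _ =>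
    star_mul_self_nonneg (C i j))).mp (h3 j (Finset.mem_univ j)) i (Finset.mem_univ i)
  rw [Complex.star_def, ← Complex.normSq_eq_conj_mul_self] at h4
  have : Complex.normSq (C i j) = 0 := by exact_mod_cast h4
  simpa using Complex.normSq_eq_zero.mp this

lemma trace_mul_psd_nonneg {k : ℕ} {A B : Matrix (Fin k) (Fin k) ℂ} (hA : A.PosSemidef)
    (hB : B.PosSemidef) : 0 ≤ (A * B).trace := by
  obtain ⟨C, rfl⟩ : ∃ C : Matrix (Fin k) (Fin k) ℂ, A = Cᴴ * C := by
    open scoped MatrixOrder Matrix.Norms.L2Operator in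
    exact CStarAlgebra.nonneg_iff_eq_star_mul_self.mp hA.nonneg
  rw [Matrix.mul_assoc, Matrix.trace_mul_comm]
  exact trace_psd_nonneg (hB.mul_mul_conjTranspose_same C)


noncomputable def traceForm (k : ℕ) :
    Matrix (Fin k) (Fin k) ℂ →ₗ[ℝ] Module.Dual ℝ (Matrix (Fin k) (Fin k) ℂ) :=
  LinearMap.mk₂ ℝ (fun X B => ((X * B).trace).re)
    (fun X Y B => by simp [Matrix.add_mul])
    (fun r X B => by simp [Matrix.smul_mul, Complex.smul_re])
    (fun X Y B => by simp [Matrix.mul_add])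
    (fun r X B => by simp [Matrix.mul_smul, Complex.smul_re])

lemma traceForm_apply {k : ℕ} (X B : Matrix (Fin k) (Fin k) ℂ) :
    traceForm k X B = ((X * B).trace).re := rfl

lemma traceForm_surjective (k : ℕ) : Function.Surjective (traceForm k) := by
  haveI : FiniteDimensional ℝ (Matrix (Fin k) (Fin k) ℂ) := by
    exact Module.Finite.matrix
  refine (LinearMap.injective_iff_surjective_of_finrank_eq_finrank
    (Subspace.dual_finrank_eq).symm).mp ?_
  rw [injective_iff_map_eq_zero]
  intro X hX
  ext a b
  have h1 : ∀ B, ((X * B).trace).re = 0 := fun B => by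
    have := congrFun (congrArg DFunLike.coe hX) B
    simpa [traceForm_apply] using this
  have e1 : (X * Matrix.single b a (1:ℂ)).trace = X a b := by
    simp [Matrix.trace, Matrix.diag, Matrix.mul_apply, Matrix.single, Finset.sum_ite_eq, ite_and]
  have e2 : (X * Matrix.single b a (Complex.I)).trace = Complex.I * X a b := by
    simp [Matrix.trace, Matrix.diag, Matrix.mul_apply, Matrix.single, Finset.sum_ite_eq, ite_and,
      mul_comm]
  have r1 := h1 (Matrix.single b a 1)
  have r2 := h1 (Matrix.single b a Complex.I)
  rw [e1] at r1
  rw [e2] at r2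
  simp only [Complex.mul_re, Complex.I_re, Complex.I_im] at r2
  apply Complex.ext <;> simp [r1] <;> linarith [r2]

lemma trace_herm_mul_real {k : ℕ} {A H : Matrix (Fin k) (Fin k) ℂ}
    (hA : A.IsHermitian) (hH : H.IsHermitian) :
    (A * H).trace = (((A * H).trace).re : ℂ) := by
  have : star ((A * H).trace) = (A * H).trace := by
    rw [← Matrix.trace_conjTranspose, Matrix.conjTranspose_mul, hA.eq, hH.eq,
      Matrix.trace_mul_comm]
  exact (Complex.conj_eq_iff_re.mp this).symm


lemma perturb_posSemidef {k : ℕ} (hk : 0 < k) (A : Matrix (Fin k) (Fin k) ℂ)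
    (hA : A.IsHermitian) :
    (((k : ℂ))⁻¹ • (1 : Matrix (Fin k) (Fin k) ℂ) +
      (((((k:ℝ) * ((∑ a, ∑ b, ‖A a b‖) + 1))⁻¹ : ℝ)) : ℂ) • A).PosSemidef := by
  set C : ℝ := ∑ a, ∑ b, ‖A a b‖ with hCdef
  have hC0 : 0 ≤ C := Finset.sum_nonneg fun a _ => Finset.sum_nonneg fun b _ => (norm_nonneg _)
  set t : ℝ := ((k:ℝ) * (C + 1))⁻¹ with htdef
  have hk1 : (1:ℝ) ≤ (k:ℝ) := by exact_mod_cast hk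
  have hkpos : (0:ℝ) < (k:ℝ) := by linarith
  have ht0 : 0 < t := by positivity
  refine Matrix.posSemidef_iff_dotProduct_mulVec.mpr ⟨?_, ?_⟩
  · unfold Matrix.IsHermitian
    rw [Matrix.conjTranspose_add, Matrix.conjTranspose_smul, Matrix.conjTranspose_smul,
      Matrix.conjTranspose_one, hA.eq]
    congr 1 <;> congr 1
    · simp
    · simp [Complex.star_def, Complex.conj_ofReal]
  · intro x
    have hexp : star x ⬝ᵥ ((((k : ℂ))⁻¹ • (1 : Matrix (Fin k) (Fin k) ℂ) + ((t:ℝ):ℂ) • A) *ᵥ x)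
        = ((k : ℂ))⁻¹ * (star x ⬝ᵥ x) + ((t:ℝ):ℂ) * (star x ⬝ᵥ (A *ᵥ x)) := by
      rw [Matrix.add_mulVec, Matrix.smul_mulVec, Matrix.smul_mulVec,
        Matrix.one_mulVec, dotProduct_add, dotProduct_smul, dotProduct_smul]
      simp [smul_eq_mul]
    rw [hexp]
    -- the quadratic forms
    set S : ℝ := ∑ i, Complex.normSq (x i) with hSdef
    have hS0 : 0 ≤ S := Finset.sum_nonneg fun i _ => Complex.normSq_nonneg _
    have hs : (star x ⬝ᵥ x) = ((S : ℝ) : ℂ) := by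
      rw [hSdef]
      push_cast
      simp [dotProduct, Complex.star_def, Complex.normSq_eq_conj_mul_self]
    set w : ℂ := star x ⬝ᵥ (A *ᵥ x) with hwdef
    have hwreal : w = ((w.re : ℝ) : ℂ) := by
      have hsw : star w = w := by
        rw [hwdef, ← Matrix.star_dotProduct_star, star_star, Matrix.star_mulVec, hA.eq,
          Matrix.dotProduct_mulVec]
      exact (Complex.conj_eq_iff_re.mp hsw).symm
    -- bound on |w.re|
    have hxb : ∀ i, ‖x i‖ ^ 2 ≤ S := fun i => by
      rw [Complex.sq_norm]
      exact Finset.single_le_sum (fun i _ => Complex.normSq_nonneg (x i)) (Finset.mem_univ i)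
    have hxx : ∀ i j, ‖x i‖ * ‖x j‖ ≤ S := fun i j => by
      nlinarith [hxb i, hxb j, sq_nonneg (‖x i‖ - ‖x j‖),
        norm_nonneg (x i), norm_nonneg (x j)]
    have hwabs : ‖w‖ ≤ C * S := by
      rw [hwdef]
      have : (star x ⬝ᵥ (A *ᵥ x)) = ∑ i, ∑ j, star (x i) * (A i j * x j) := by
        simp [dotProduct, Matrix.mulVec, Finset.mul_sum]
      rw [this]
      calc ‖∑ i, ∑ j, star (x i) * (A i j * x j)‖
          ≤ ∑ i, ‖∑ j, star (x i) * (A i j * x j)‖ := norm_sum_le _ _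
        _ ≤ ∑ i, ∑ j, ‖star (x i) * (A i j * x j)‖ :=
            Finset.sum_le_sum fun i _ => norm_sum_le _ _
        _ ≤ ∑ i, ∑ j, ‖A i j‖ * S := by
            refine Finset.sum_le_sum fun i _ => Finset.sum_le_sum fun j _ => ?_
            rw [norm_mul, norm_mul, show star (x i) = (starRingEnd ℂ) (x i) from rfl, Complex.norm_conj]
            calc ‖x i‖ * (‖A i j‖ * ‖x j‖)
                = ‖A i j‖ * (‖x i‖ * ‖x j‖) := by ring
              _ ≤ ‖A i j‖ * S :=
                  mul_le_mul_of_nonneg_left (hxx i j) (norm_nonneg _)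
        _ = C * S := by rw [hCdef]; simp [Finset.sum_mul]
    have hwre : -(C * S) ≤ w.re := by
      have := Complex.abs_re_le_norm w
      cases abs_le.mp (this.trans hwabs) with
      | intro h1 h2 => linarith
    rw [hs, hwreal]
    have hcast : ((k:ℂ))⁻¹ * ((S:ℝ):ℂ) + ((t:ℝ):ℂ) * ((w.re:ℝ):ℂ)
        = ((((k:ℝ))⁻¹ * S + t * w.re : ℝ) : ℂ) := by push_cast; ring
    rw [hcast, Complex.zero_le_real]
    have key : ((k:ℝ)*(C+1)) * (((k:ℝ))⁻¹ * S + t * w.re) = (C+1)*S + w.re := by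
      rw [htdef]; field_simp
    nlinarith [key, hS0, hwre, mul_pos hkpos (show (0:ℝ) < C+1 by linarith)]


lemma gibbs_term_le {p q : ℝ} (hp : 0 ≤ p) (hq : 0 ≤ q) (h0 : q = 0 → p = 0) :
    p - q ≤ p * Real.log (p / q) := by
  rcases eq_or_lt_of_le hp with hp0 | hp0
  · simp [← hp0]; linarith
  · have hq0 : 0 < q := by
      rcases eq_or_lt_of_le hq with h | h
      · exact absurd (h0 h.symm) (by linarith)
      · exact h
    have hlog : Real.log (q / p) ≤ q / p - 1 := Real.log_le_sub_one_of_pos (by positivity)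
    have hlogeq : Real.log (q / p) = -Real.log (p / q) := by
      rw [Real.log_div (ne_of_gt hq0) (ne_of_gt hp0), Real.log_div (ne_of_gt hp0) (ne_of_gt hq0)]
      ring
    rw [hlogeq] at hlog
    have h2 := mul_le_mul_of_nonneg_left hlog hp
    have h3 : p * (q / p - 1) = q - p := by field_simp
    rw [h3] at h2
    nlinarith

lemma gibbs_term_eq {p q : ℝ} (hp : 0 ≤ p) (hq : 0 ≤ q) (h0 : q = 0 → p = 0)
    (heq : p * Real.log (p / q) = p - q) : p = q := by
  rcases eq_or_lt_of_le hp with hp0 | hp0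
  · rw [← hp0] at heq ⊢; simp at heq; linarith
  · have hq0 : 0 < q := by
      rcases eq_or_lt_of_le hq with h | h
      · exact absurd (h0 h.symm) (by linarith)
      · exact h
    by_contra hne
    have hlog : Real.log (q / p) < q / p - 1 :=
      Real.log_lt_sub_one_of_pos (by positivity) (by
        intro hc
        exact hne ((div_eq_one_iff_eq (ne_of_gt hp0)).mp hc).symm)
    have hlogeq : Real.log (q / p) = -Real.log (p / q) := by
      rw [Real.log_div (ne_of_gt hq0) (ne_of_gt hp0), Real.log_div (ne_of_gt hp0) (ne_of_gt hq0)]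
      ring
    rw [hlogeq] at hlog
    have h2 := mul_lt_mul_of_pos_left hlog hp0
    have h3 : p * (q / p - 1) = q - p := by field_simp
    rw [h3] at h2
    nlinarith

lemma gibbs {ι : Type*} [Fintype ι] (p q : ι → ℝ) (hp : ∀ i, 0 ≤ p i) (hq : ∀ i, 0 ≤ q i)
    (h0 : ∀ i, q i = 0 → p i = 0) (hsum : ∑ i, p i = ∑ i, q i)
    (hD : ∑ i, p i * Real.log (p i / q i) ≤ 0) : ∀ i, p i = q i := by
  set f : ι → ℝ := fun i => p i * Real.log (p i / q i) - (p i - q i) with hf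
  have hf0 : ∀ i ∈ Finset.univ, 0 ≤ f i := fun i _ => by
    have := gibbs_term_le (hp i) (hq i) (h0 i); simp [hf]; linarith
  have hfsum : ∑ i, f i ≤ 0 := by
    have : ∑ i, f i = (∑ i, p i * Real.log (p i / q i)) - ((∑ i, p i) - ∑ i, q i) := by
      simp [hf, Finset.sum_sub_distrib]
    rw [this, hsum] at *
    linarith
  have hall := (Finset.sum_eq_zero_iff_of_nonneg hf0).mp
    (le_antisymm hfsum (Finset.sum_nonneg hf0))
  intro i
  have hi := hall i (Finset.mem_univ i)
  have : p i * Real.log (p i / q i) = p i - q i := by simp [hf] at hi; linarith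
  exact gibbs_term_eq (hp i) (hq i) (h0 i) this


end Helpers

theorem stmt7 {d m n : ℕ} (hd : 0 < d) (M : Fin m → Matrix (Fin d) (Fin d) ℂ)
    (N : Fin n → Matrix (Fin d) (Fin d) ℂ) (hM : IsPOVM M) (hN : IsPOVM N)
    (h : ∀ ρ : Matrix (Fin d) (Fin d) ℂ, IsDensity ρ → Sobs M ρ ≤ Sobs N ρ) :
    ∀ j, N j ∈ Submodule.span ℝ (Set.range M) := by
  intro j0
  by_contra hns
  have hdR : (0:ℝ) < (d:ℝ) := by exact_mod_cast hd
  have hdne : (d:ℝ) ≠ 0 := ne_of_gt hdR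
  have hdneC : (d:ℂ) ≠ 0 := Nat.cast_ne_zero.mpr hd.ne'
  obtain ⟨φ, hφj, hφmap⟩ := Submodule.exists_dual_map_eq_bot_of_notMem hns inferInstance
  have hφP : ∀ y ∈ Submodule.span ℝ (Set.range M), φ y = 0 := by
    intro y hy
    have h1 : φ y ∈ (Submodule.span ℝ (Set.range M)).map φ := Submodule.mem_map_of_mem hy
    rw [hφmap] at h1
    simpa using h1
  have hφM : ∀ i, φ (M i) = 0 := fun i => hφP _ (Submodule.subset_span ⟨i, rfl⟩)
  have hφ1 : φ 1 = 0 := by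
    refine hφP _ ?_
    rw [← hM.2]
    exact Submodule.sum_mem _ fun i _ => Submodule.subset_span ⟨i, rfl⟩
  obtain ⟨X, hX⟩ := traceForm_surjective d φ
  set A := ((2:ℝ)⁻¹) • (X + Xᴴ) with hAdef
  have hAherm : A.IsHermitian := by
    unfold Matrix.IsHermitian
    rw [hAdef, Matrix.conjTranspose_smul, Matrix.conjTranspose_add,
      Matrix.conjTranspose_conjTranspose, star_trivial]
    congr 1
    exact add_comm _ _
  have key : ∀ H : Matrix (Fin d) (Fin d) ℂ, H.IsHermitian →
      (A * H).trace = ((φ H : ℝ) : ℂ) := by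
    intro H hH
    have hz : φ H = ((X * H).trace).re := by rw [← hX]; rfl
    have hXH : (Xᴴ * H).trace = star ((X * H).trace) := by
      have e : Xᴴ * H = (Hᴴ * X)ᴴ := by
        rw [Matrix.conjTranspose_mul, Matrix.conjTranspose_conjTranspose]
      rw [e, Matrix.trace_conjTranspose, hH.eq, Matrix.trace_mul_comm]
    have e2 : (A * H).trace = (2:ℝ)⁻¹ • ((X*H).trace + (Xᴴ*H).trace) := by
      rw [hAdef, Matrix.smul_mul, Matrix.add_mul, Matrix.trace_smul, Matrix.trace_add]
    rw [e2, hXH, hz]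
    rw [show star ((X*H).trace) = (starRingEnd ℂ) ((X*H).trace) from rfl, Complex.add_conj]
    rw [Complex.real_smul]
    push_cast
    ring
  have hAM : ∀ i, (A * M i).trace = 0 := fun i => by
    rw [key _ (hM.1 i).1, hφM i]; simp
  have hA1 : A.trace = 0 := by
    have := key 1 Matrix.isHermitian_one
    rw [mul_one] at this
    rw [this, hφ1]; simp
  have hANj : (A * N j0).trace = ((φ (N j0) : ℝ) : ℂ) := key _ (hN.1 j0).1
  have hC0 : 0 ≤ ∑ a, ∑ b, ‖A a b‖ :=
    Finset.sum_nonneg fun a _ => Finset.sum_nonneg fun b _ => norm_nonneg _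
  set C := ∑ a, ∑ b, ‖A a b‖ with hCdef
  set t : ℝ := ((d:ℝ) * (C + 1))⁻¹ with htdef
  have ht0 : 0 < t := by rw [htdef]; positivity
  have hρpsd := perturb_posSemidef hd A hAherm
  rw [← hCdef, ← htdef] at hρpsd
  set ρ := ((d:ℂ))⁻¹ • (1 : Matrix (Fin d) (Fin d) ℂ) + ((t : ℝ) : ℂ) • A with hρdef
  have hρtr : ρ.trace = 1 := by
    rw [hρdef, Matrix.trace_add, Matrix.trace_smul, Matrix.trace_smul, Matrix.trace_one, hA1]
    simp [smul_eq_mul, inv_mul_cancel₀ hdneC]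
  have hρdens : IsDensity ρ := ⟨hρpsd, hρtr⟩
  have hprobline : ∀ B : Matrix (Fin d) (Fin d) ℂ,
      (B * ρ).trace = (d:ℂ)⁻¹ * B.trace + ((t:ℝ):ℂ) * (B * A).trace := by
    intro B
    rw [hρdef, Matrix.mul_add, Matrix.trace_add, Matrix.mul_smul, Matrix.mul_smul,
      Matrix.trace_smul, Matrix.trace_smul, Matrix.mul_one]
    simp [smul_eq_mul]
  have htrR : ∀ {B : Matrix (Fin d) (Fin d) ℂ}, B.PosSemidef →
      B.trace = ((B.trace.re : ℝ) : ℂ) := by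
    intro B hB
    have h1 := trace_psd_nonneg hB
    have him : B.trace.im = 0 := by
      have := (Complex.le_def.mp h1).2
      simpa using this.symm
    exact Complex.ext (by simp) (by simp [him])
  have hVM : ∀ i, 0 ≤ ((M i).trace).re := fun i => by
    have := (Complex.le_def.mp (trace_psd_nonneg (hM.1 i))).1
    simpa using this
  have hVN : ∀ j, 0 ≤ ((N j).trace).re := fun j => by
    have := (Complex.le_def.mp (trace_psd_nonneg (hN.1 j))).1
    simpa using this
  -- probabilities for M
  have hpM : ∀ i, prob M ρ i = ((M i).trace).re / d := by
    intro i
    show ((M i * ρ).trace).re = _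
    rw [hprobline (M i)]
    have h2 : (M i * A).trace = 0 := by rw [Matrix.trace_mul_comm]; exact hAM i
    rw [h2, htrR (hM.1 i)]
    rw [show ((d:ℂ))⁻¹ * ((((M i).trace).re:ℝ):ℂ) + ((t:ℝ):ℂ) * 0
      = (((((M i).trace).re / d : ℝ)) : ℂ) by push_cast; ring]
    exact Complex.ofReal_re _
  have hMsum : ∑ i, ((M i).trace).re = (d:ℝ) := by
    calc ∑ i, ((M i).trace).re = (∑ i, (M i).trace).re := (Complex.re_sum _ _).symm
      _ = ((∑ i, M i).trace).re := by rw [Matrix.trace_sum]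
      _ = (d:ℝ) := by rw [hM.2, Matrix.trace_one]; simp
  have hSM : Sobs M ρ = Real.log d := by
    unfold Sobs
    have e : ∀ i ∈ Finset.univ, prob M ρ i * Real.log (prob M ρ i / ((M i).trace).re)
        = ((M i).trace).re / d * (-Real.log d) := by
      intro i _
      rw [hpM i]
      rcases eq_or_lt_of_le (hVM i) with h0 | h0
      · rw [← h0]; simp
      · rw [show ((M i).trace).re / d / ((M i).trace).re = (d:ℝ)⁻¹ by
          field_simp]
        rw [Real.log_inv]
    rw [Finset.sum_congr rfl e, ← Finset.sum_mul, ← Finset.sum_div, hMsum]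
    field_simp
  -- probabilities for N
  have hqN : ∀ j, prob N ρ j = ((N j).trace).re / d + t * φ (N j) := by
    intro j
    show ((N j * ρ).trace).re = _
    rw [hprobline (N j)]
    have h2 : (N j * A).trace = ((φ (N j) : ℝ) : ℂ) := by
      rw [Matrix.trace_mul_comm]; exact key _ (hN.1 j).1
    rw [h2, htrR (hN.1 j)]
    rw [show ((d:ℂ))⁻¹ * ((((N j).trace).re:ℝ):ℂ) + ((t:ℝ):ℂ) * ((φ (N j):ℝ):ℂ)
      = (((((N j).trace).re / d + t * φ (N j) : ℝ)) : ℂ) by push_cast; ring]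
    exact Complex.ofReal_re _
  have hp0 : ∀ j, 0 ≤ prob N ρ j := fun j => by
    have := (Complex.le_def.mp (trace_mul_psd_nonneg (hN.1 j) hρpsd)).1
    exact (by simpa using this : 0 ≤ ((N j * ρ).trace).re)
  have hq0 : ∀ j, 0 ≤ ((N j).trace).re / d := fun j => div_nonneg (hVN j) (le_of_lt hdR)
  have hq0p : ∀ j, ((N j).trace).re / d = 0 → prob N ρ j = 0 := by
    intro j hqj
    have hVj : ((N j).trace).re = 0 := by
      rcases div_eq_zero_iff.mp hqj with h1 | h1
      · exact h1
      · exact absurd h1 hdne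
    have htr0 : (N j).trace = 0 := by rw [htrR (hN.1 j), hVj]; simp
    have hNj0 : N j = 0 := trace_psd_eq_zero (hN.1 j) htr0
    show ((N j * ρ).trace).re = 0
    rw [hNj0]
    simp
  have hpsum : ∑ j, prob N ρ j = 1 := by
    have : ∑ j, ((N j * ρ).trace) = 1 := by
      rw [← Matrix.trace_sum, ← Finset.sum_mul, hN.2, one_mul, hρtr]
    calc ∑ j, prob N ρ j = (∑ j, (N j * ρ).trace).re := (Complex.re_sum _ _).symm
      _ = 1 := by rw [this]; simp
  have hqsum : ∑ j, ((N j).trace).re / d = 1 := by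
    rw [← Finset.sum_div]
    have : ∑ j, ((N j).trace).re = (d:ℝ) := by
      calc ∑ j, ((N j).trace).re = (∑ j, (N j).trace).re := (Complex.re_sum _ _).symm
        _ = ((∑ j, N j).trace).re := by rw [Matrix.trace_sum]
        _ = (d:ℝ) := by rw [hN.2, Matrix.trace_one]; simp
    rw [this, div_self hdne]
  have hSN : Sobs N ρ = Real.log d
      - ∑ j, prob N ρ j * Real.log (prob N ρ j / (((N j).trace).re / d)) := by
    unfold Sobs
    have e : ∀ j ∈ Finset.univ, prob N ρ j * Real.log (prob N ρ j / ((N j).trace).re)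
        = prob N ρ j * Real.log (prob N ρ j / (((N j).trace).re / d))
          - prob N ρ j * Real.log d := by
      intro j _
      rcases eq_or_lt_of_le (hp0 j) with h0 | h0
      · rw [← h0]; ring
      · have hqj : ((N j).trace).re / d ≠ 0 := by
          intro hc
          have := hq0p j hc
          linarith
        have hqjpos : 0 < ((N j).trace).re / d := lt_of_le_of_ne (hq0 j) (Ne.symm hqj)
        have hW : prob N ρ j / ((N j).trace).re
            = prob N ρ j / (((N j).trace).re / d) / d := by
          rw [div_div, div_mul_cancel₀ _ hdne]
        rw [hW, Real.log_div (by positivity) hdne]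
        ring
    rw [Finset.sum_congr rfl e, Finset.sum_sub_distrib, ← Finset.sum_mul, hpsum]
    ring
  have hle := h ρ hρdens
  rw [hSM, hSN] at hle
  have hD : ∑ j, prob N ρ j * Real.log (prob N ρ j / (((N j).trace).re / d)) ≤ 0 := by
    linarith
  have hpq := gibbs (fun j => prob N ρ j) (fun j => ((N j).trace).re / d) hp0 hq0 hq0p
    (by rw [hpsum, hqsum]) hD
  have heq := hqN j0
  have h4 : prob N ρ j0 = ((N j0).trace).re / d := hpq j0
  rw [h4] at heq
  have : φ (N j0) = 0 := by
    have h2 : t * φ (N j0) = 0 := by linarith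
    rcases mul_eq_zero.mp h2 with h3 | h3
    · exact absurd h3 (ne_of_gt ht0)
    · exact h3
  exact hφj this
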